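/- arXiv:1411.3840 — 2 statements merged into one kernel-verified Lean document; each statement's English description precedes it below -/
import Mathlib

section
/- Let λ_n(ξ) denote the increasingly ordered eigenvalues of A(ξ) = A₀ + A₁(ξ) + ½|ξ|²I. Then for every ξ ∈ ℝ^d and every n, λ_n(ξ) ≤ E_n + 2|ξ| E_n^{1/2} + ½|ξ|². -/
open scoped ComplexConjugate ENNReal

noncomputable abbrev eN (m : ℕ) : lp (fun _ : ℕ => ℂ) 2 := lp.single 2 m (1:ℂ)

lemma eN_apply (m j : ℕ) : (eN m) j = if j = m then 1 else 0 := by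
  rw [lp.single_apply]
  split_ifs with h
  · subst h; simp
  · simp [h]

lemma eN_norm (m : ℕ) : ‖eN m‖ = 1 := by
  simpa using lp.norm_single (p := 2) (by norm_num) (fun _ : ℕ => (1:ℂ)) m

lemma eN_inner (m : ℕ) (g : lp (fun _ : ℕ => ℂ) 2) :
    (inner ℂ (eN m) g : ℂ) = g m := by
  rw [lp.inner_single_left]
  simp [RCLike.inner_apply]

lemma eN_orthonormal : Orthonormal ℂ eN := by
  rw [orthonormal_iff_ite]
  intro i j
  rw [eN_inner, eN_apply]


lemma lp2_norm_sq (g : lp (fun _ : ℕ => ℂ) 2) : ‖g‖ ^ 2 = ∑' m, ‖g m‖ ^ 2 := by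
  calc ‖g‖ ^ 2 = ‖g‖ ^ (2 : ℝ≥0∞).toReal := by norm_cast
    _ = ∑' i, ‖g i‖ ^ (2 : ℝ≥0∞).toReal := lp.norm_rpow_eq_tsum (by norm_num) g
    _ = ∑' i, ‖g i‖ ^ 2 := by norm_cast

lemma lp2_summable_sq (g : lp (fun _ : ℕ => ℂ) 2) : Summable fun m => ‖g m‖ ^ 2 := by
  have h := (lp.memℓp g).summable (p := 2) (by norm_num)
  have : (fun i => ‖g i‖ ^ (2 : ℝ≥0∞).toReal) = fun i => ‖g i‖ ^ 2 := by
    funext i; norm_cast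
  rwa [this] at h

lemma conj_mul_self' (z : ℂ) : conj z * z = ((‖z‖ ^ 2 : ℝ) : ℂ) := by
  rw [mul_comm, Complex.mul_conj, Complex.normSq_eq_norm_sq]

lemma aux_core (E : ℕ → ℝ) (hE1 : ∀ n, 1 ≤ E n) (r : ℝ)
    (a1 : lp (fun _ : ℕ => ℂ) 2 → ℕ → ℂ)
    (ha1 : ∀ g : lp (fun _ : ℕ => ℂ) 2,
      Summable (fun n => (E n) ^ 2 * ‖g n‖ ^ 2) →
      Summable (fun n => ‖a1 g n‖ ^ 2) ∧
        ∑' n : ℕ, ‖a1 g n‖ ^ 2 ≤ 2 * r ^ 2 * ∑' n : ℕ, E n * ‖g n‖ ^ 2)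
    (g : lp (fun _ : ℕ => ℂ) 2) (hnorm : ‖g‖ = 1)
    (hE2 : Summable fun m => E m ^ 2 * ‖g m‖ ^ 2) :
    Summable (fun m => E m * ‖g m‖ ^ 2) ∧
    ∃ z : ℂ, ‖z‖ ^ 2 ≤ 2 * r ^ 2 * ∑' m : ℕ, E m * ‖g m‖ ^ 2 ∧
      (∑' m : ℕ, conj (g m) * ((E m : ℂ) * g m + a1 g m + ((r ^ 2 / 2 : ℝ) : ℂ) * g m)).re
        = (∑' m : ℕ, E m * ‖g m‖ ^ 2) + z.re + r ^ 2 / 2 := by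
  have hg2 := lp2_summable_sq g
  have hg2sum : ∑' m : ℕ, ‖g m‖ ^ 2 = 1 := by
    rw [← lp2_norm_sq, hnorm]; norm_num
  have hEsum : Summable fun m => E m * ‖g m‖ ^ 2 := by
    refine hE2.of_nonneg_of_le
      (fun m => mul_nonneg (le_trans zero_le_one (hE1 m)) (by positivity)) (fun m => ?_)
    have h1 := hE1 m
    have h2 : E m ≤ E m ^ 2 := by nlinarith
    exact mul_le_mul_of_nonneg_right h2 (by positivity)
  obtain ⟨hA1s, hA1le⟩ := ha1 g hE2
  have hAmem : Memℓp (a1 g) 2 := by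
    apply memℓp_gen
    have h : (fun i : ℕ => ‖a1 g i‖ ^ (2 : ℝ≥0∞).toReal) = fun i => ‖a1 g i‖ ^ 2 := by
      funext i; norm_cast
    rwa [h]
  set A : lp (fun _ : ℕ => ℂ) 2 := ⟨a1 g, hAmem⟩ with hA
  have hAcoe : ∀ m, A m = a1 g m := fun m => rfl
  have hAnorm : ‖A‖ ^ 2 = ∑' m : ℕ, ‖a1 g m‖ ^ 2 := by
    rw [lp2_norm_sq]
  refine ⟨hEsum, ⟨inner ℂ g A, ?_, ?_⟩⟩
  · calc ‖(inner ℂ g A : ℂ)‖ ^ 2 ≤ (‖g‖ * ‖A‖) ^ 2 :=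
          pow_le_pow_left₀ (norm_nonneg _) (norm_inner_le_norm _ _) 2
      _ = ‖A‖ ^ 2 := by rw [hnorm]; ring
      _ = ∑' m : ℕ, ‖a1 g m‖ ^ 2 := hAnorm
      _ ≤ 2 * r ^ 2 * ∑' m : ℕ, E m * ‖g m‖ ^ 2 := hA1le
  · have h1 : ∀ m : ℕ, conj (g m) * ((E m : ℂ) * g m) = ((E m * ‖g m‖ ^ 2 : ℝ) : ℂ) := by
      intro m
      rw [show conj (g m) * ((E m : ℂ) * g m) = (E m : ℂ) * (conj (g m) * g m) from by ring,
        conj_mul_self']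
      exact (Complex.ofReal_mul _ _).symm
    have h3 : ∀ m : ℕ, conj (g m) * (((r ^ 2 / 2 : ℝ) : ℂ) * g m)
        = ((r ^ 2 / 2 * ‖g m‖ ^ 2 : ℝ) : ℂ) := by
      intro m
      rw [show conj (g m) * (((r ^ 2 / 2 : ℝ) : ℂ) * g m)
          = ((r ^ 2 / 2 : ℝ) : ℂ) * (conj (g m) * g m) from by ring, conj_mul_self']
      exact (Complex.ofReal_mul _ _).symm
    have hs1 : Summable fun m : ℕ => ((E m * ‖g m‖ ^ 2 : ℝ) : ℂ) :=
      Complex.summable_ofReal.mpr hEsum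
    have hs2 : Summable fun m : ℕ => conj (g m) * a1 g m := by
      have h := lp.summable_inner (𝕜 := ℂ) g A
      simpa [RCLike.inner_apply, hAcoe, mul_comm] using h
    have hs3 : Summable fun m : ℕ => ((r ^ 2 / 2 * ‖g m‖ ^ 2 : ℝ) : ℂ) :=
      Complex.summable_ofReal.mpr (hg2.mul_left _)
    have split : (fun m : ℕ => conj (g m) * ((E m : ℂ) * g m + a1 g m + ((r ^ 2 / 2 : ℝ) : ℂ) * g m))
        = fun m : ℕ => ((E m * ‖g m‖ ^ 2 : ℝ) : ℂ) + conj (g m) * a1 g m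
            + ((r ^ 2 / 2 * ‖g m‖ ^ 2 : ℝ) : ℂ) := by
      funext m; rw [← h1 m, ← h3 m]; ring
    have hinner : (inner ℂ g A : ℂ) = ∑' m : ℕ, conj (g m) * a1 g m := by
      rw [lp.inner_eq_tsum]
      apply tsum_congr
      intro m
      rw [RCLike.inner_apply', hAcoe]
    rw [split, Summable.tsum_add (hs1.add hs2) hs3, Summable.tsum_add hs1 hs2, ← Complex.ofReal_tsum,
      ← Complex.ofReal_tsum, hinner]
    rw [Complex.add_re, Complex.add_re, Complex.ofReal_re, Complex.ofReal_re]
    rw [tsum_mul_left, hg2sum]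
    ring

lemma norm_z_le (z : ℂ) (r c : ℝ) (hr : 0 ≤ r) (hc : 0 ≤ c)
    (hz : ‖z‖ ^ 2 ≤ 2 * r ^ 2 * c) : ‖z‖ ≤ 2 * r * Real.sqrt c := by
  have h2 : ‖z‖ ^ 2 ≤ (2 * r * Real.sqrt c) ^ 2 := by
    have : (2 * r * Real.sqrt c) ^ 2 = 4 * r ^ 2 * c := by
      rw [mul_pow, mul_pow, Real.sq_sqrt hc]; ring
    rw [this]
    nlinarith [mul_nonneg (sq_nonneg r) hc]
  have h3 := Real.sqrt_le_sqrt h2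
  rwa [Real.sqrt_sq (norm_nonneg z),
    Real.sqrt_sq (mul_nonneg (mul_nonneg (by norm_num) hr) (Real.sqrt_nonneg c))] at h3

lemma aux_Q_le (E : ℕ → ℝ) (hE1 : ∀ n, 1 ≤ E n) (hEmono : Monotone E) (r : ℝ) (hr : 0 ≤ r)
    (a1 : lp (fun _ : ℕ => ℂ) 2 → ℕ → ℂ)
    (ha1 : ∀ g : lp (fun _ : ℕ => ℂ) 2,
      Summable (fun n => (E n) ^ 2 * ‖g n‖ ^ 2) →
      Summable (fun n => ‖a1 g n‖ ^ 2) ∧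
        ∑' n : ℕ, ‖a1 g n‖ ^ 2 ≤ 2 * r ^ 2 * ∑' n : ℕ, E n * ‖g n‖ ^ 2)
    (n : ℕ) (g : lp (fun _ : ℕ => ℂ) 2)
    (hsupp : ∀ m, n < m → g m = 0) (hnorm : ‖g‖ = 1) :
    Summable (fun m => E m ^ 2 * ‖g m‖ ^ 2) ∧
    (∑' m : ℕ, conj (g m) * ((E m : ℂ) * g m + a1 g m + ((r ^ 2 / 2 : ℝ) : ℂ) * g m)).re
      ≤ E n + 2 * r * Real.sqrt (E n) + r ^ 2 / 2 := by
  have hE2 : Summable (fun m => E m ^ 2 * ‖g m‖ ^ 2) := by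
    apply summable_of_ne_finset_zero (s := Finset.range (n + 1))
    intro m hm
    have hg : g m = 0 := hsupp m (by simpa [Nat.lt_succ_iff, not_lt] using hm)
    simp [hg]
  obtain ⟨hEsum, z, hz, hdec⟩ := aux_core E hE1 r a1 ha1 g hnorm hE2
  have hg1 : ∑' m : ℕ, ‖g m‖ ^ 2 = 1 := by rw [← lp2_norm_sq, hnorm]; norm_num
  have hEle : ∑' m : ℕ, E m * ‖g m‖ ^ 2 ≤ E n := by
    refine le_trans (Summable.tsum_le_tsum (fun m => ?_) hEsum ((lp2_summable_sq g).mul_left (E n)))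
      (by rw [tsum_mul_left, hg1, mul_one])
    rcases le_or_gt m n with h | h
    · exact mul_le_mul_of_nonneg_right (hEmono h) (by positivity)
    · simp [hsupp m h]
  have hEnn : 0 ≤ ∑' m : ℕ, E m * ‖g m‖ ^ 2 :=
    tsum_nonneg fun m => mul_nonneg (zero_le_one.trans (hE1 m)) (by positivity)
  have hzn : ‖z‖ ≤ 2 * r * Real.sqrt (E n) := by
    have h := norm_z_le z r (∑' m : ℕ, E m * ‖g m‖ ^ 2) hr hEnn hz
    refine h.trans ?_
    have := Real.sqrt_le_sqrt hEle
    nlinarith [Real.sqrt_nonneg (∑' m : ℕ, E m * ‖g m‖ ^ 2)]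
  have hzre : z.re ≤ 2 * r * Real.sqrt (E n) := by
    have h1 : z.re ≤ ‖z‖ := by exact Complex.re_le_norm z
    linarith
  refine ⟨hE2, ?_⟩
  rw [hdec]
  linarith

lemma aux_Q_ge (E : ℕ → ℝ) (hE1 : ∀ n, 1 ≤ E n) (r : ℝ) (hr : 0 ≤ r)
    (a1 : lp (fun _ : ℕ => ℂ) 2 → ℕ → ℂ)
    (ha1 : ∀ g : lp (fun _ : ℕ => ℂ) 2,
      Summable (fun n => (E n) ^ 2 * ‖g n‖ ^ 2) →
      Summable (fun n => ‖a1 g n‖ ^ 2) ∧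
        ∑' n : ℕ, ‖a1 g n‖ ^ 2 ≤ 2 * r ^ 2 * ∑' n : ℕ, E n * ‖g n‖ ^ 2)
    (N : ℕ) (g : lp (fun _ : ℕ => ℂ) 2)
    (hsupp : ∀ m, m ≠ N → g m = 0) (hnorm : ‖g‖ = 1) :
    E N - 2 * r * Real.sqrt (E N)
      ≤ (∑' m : ℕ, conj (g m) * ((E m : ℂ) * g m + a1 g m + ((r ^ 2 / 2 : ℝ) : ℂ) * g m)).re := by
  have hE2 : Summable (fun m => E m ^ 2 * ‖g m‖ ^ 2) := by
    apply summable_of_ne_finset_zero (s := {N})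
    intro m hm
    have hg : g m = 0 := hsupp m (by simpa using hm)
    simp [hg]
  obtain ⟨hEsum, z, hz, hdec⟩ := aux_core E hE1 r a1 ha1 g hnorm hE2
  have hg1 : ∑' m : ℕ, ‖g m‖ ^ 2 = 1 := by rw [← lp2_norm_sq, hnorm]; norm_num
  have hgN : ‖g N‖ ^ 2 = 1 := by
    rw [← hg1, tsum_eq_single N (fun m hm => by simp [hsupp m hm])]
  have hEeq : ∑' m : ℕ, E m * ‖g m‖ ^ 2 = E N := by
    rw [tsum_eq_single N (fun m hm => by simp [hsupp m hm]), hgN, mul_one]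
  have hzn : ‖z‖ ≤ 2 * r * Real.sqrt (E N) := by
    apply norm_z_le z r (E N) hr (zero_le_one.trans (hE1 N))
    rwa [hEeq] at hz
  have hzre : -(2 * r * Real.sqrt (E N)) ≤ z.re := by
    have h1 : -‖z‖ ≤ z.re := by
      have := Complex.abs_re_le_norm z
      cases abs_le.1 this with
      | intro h _ => linarith
    linarith
  rw [hdec, hEeq]
  have : (0:ℝ) ≤ r ^ 2 / 2 := by positivity
  linarith

lemma exists_perp_witness (n : ℕ) (S : Submodule ℂ (lp (fun _ : ℕ => ℂ) 2))
    [FiniteDimensional ℂ S] (hS : Module.finrank ℂ S = n) :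
    ∃ g : lp (fun _ : ℕ => ℂ) 2, g ∈ Sᗮ ∧ (∀ m, n < m → g m = 0) ∧ ‖g‖ = 1 := by
  classical
  set V : Submodule ℂ (lp (fun _ : ℕ => ℂ) 2) :=
    Submodule.span ℂ (Set.range fun i : Fin (n + 1) => eN (i : ℕ)) with hVdef
  have hli : LinearIndependent ℂ (fun i : Fin (n + 1) => eN (i : ℕ)) :=
    (eN_orthonormal.linearIndependent).comp _ Fin.val_injective
  have hV : Module.finrank ℂ V = n + 1 := by
    rw [hVdef, finrank_span_eq_card hli, Fintype.card_fin]
  haveI : CompleteSpace S := FiniteDimensional.complete ℂ S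
  set T : V →ₗ[ℂ] S := ((S.orthogonalProjectionOnto).toLinearMap).comp V.subtype with hTdef
  have hT : ¬ Function.Injective T := by
    intro h
    have h2 := LinearMap.finrank_le_finrank_of_injective h
    rw [hV, hS] at h2
    omega
  have hker : LinearMap.ker T ≠ ⊥ := by rwa [Ne, LinearMap.ker_eq_bot]
  obtain ⟨v, hvker, hv0⟩ := Submodule.exists_mem_ne_zero_of_ne_bot hker
  have hperp : (v : lp (fun _ : ℕ => ℂ) 2) ∈ Sᗮ := by
    rw [← Submodule.orthogonalProjectionOnto_eq_zero_iff]
    exact LinearMap.mem_ker.mp hvker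
  have hcoord : ∀ m, n < m → (v : lp (fun _ : ℕ => ℂ) 2) m = 0 := by
    intro m hm
    have hmem : (v : lp (fun _ : ℕ => ℂ) 2) ∈ V := v.2
    have hVle : V ≤ LinearMap.ker (innerSL ℂ (eN m) : lp (fun _ : ℕ => ℂ) 2 →ₗ[ℂ] ℂ) := by
      rw [hVdef, Submodule.span_le]
      rintro y ⟨i, rfl⟩
      have hne : (i : ℕ) ≠ m := by omega
      have : (inner ℂ (eN m) (eN (i : ℕ)) : ℂ) = 0 := by
        rw [eN_inner, eN_apply]
        simp [Ne.symm hne]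
      simpa [LinearMap.mem_ker] using this
    have h0 := hVle hmem
    rw [LinearMap.mem_ker] at h0
    rw [← eN_inner m]
    exact h0
  have hx0 : (v : lp (fun _ : ℕ => ℂ) 2) ≠ 0 := by
    intro h
    exact hv0 (Submodule.coe_eq_zero.mp h)
  have hxn : ‖(v : lp (fun _ : ℕ => ℂ) 2)‖ ≠ 0 := norm_ne_zero_iff.mpr hx0
  refine ⟨((‖(v : lp (fun _ : ℕ => ℂ) 2)‖⁻¹ : ℝ) : ℂ) • (v : lp (fun _ : ℕ => ℂ) 2),
    Submodule.smul_mem _ _ hperp, fun m hm => ?_, ?_⟩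
  · have := lp.coeFn_smul ((‖(v : lp (fun _ : ℕ => ℂ) 2)‖⁻¹ : ℝ) : ℂ) (v : lp (fun _ : ℕ => ℂ) 2)
    rw [show ((((‖(v : lp (fun _ : ℕ => ℂ) 2)‖⁻¹ : ℝ) : ℂ) • (v : lp (fun _ : ℕ => ℂ) 2)) m : ℂ)
        = ((‖(v : lp (fun _ : ℕ => ℂ) 2)‖⁻¹ : ℝ) : ℂ) * (v : lp (fun _ : ℕ => ℂ) 2) m from by
      rw [this]; rfl]
    rw [hcoord m hm, mul_zero]
  · rw [norm_smul]
    have h1 : ‖(((‖(v : lp (fun _ : ℕ => ℂ) 2)‖⁻¹ : ℝ)) : ℂ)‖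
        = ‖(v : lp (fun _ : ℕ => ℂ) 2)‖⁻¹ := by
      simp
    rw [h1, inv_mul_cancel₀ hxn]

lemma badS (N : ℕ) :
    ∃ S : Submodule ℂ (lp (fun _ : ℕ => ℂ) 2), Module.finrank ℂ S = 0 ∧
      eN N ∈ Sᗮ ∧ ∀ g ∈ Sᗮ, ∀ m : ℕ, m ≠ N → g m = 0 := by
  classical
  set S := Submodule.span ℂ (Set.range fun m : {m : ℕ // m ≠ N} => eN (m : ℕ)) with hSdef
  haveI : Infinite {m : ℕ // m ≠ N} :=
    Infinite.of_injective (fun k : ℕ => (⟨N + 1 + k, by omega⟩ : {m : ℕ // m ≠ N}))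
      (fun a b h => by
        have := congrArg Subtype.val h
        simpa using this)
  refine ⟨S, ?_, ?_, ?_⟩
  · have hnotfd : ¬ FiniteDimensional ℂ S := by
      intro hfd
      have hli : LinearIndependent ℂ (fun m : {m : ℕ // m ≠ N} => eN (m : ℕ)) :=
        eN_orthonormal.linearIndependent.comp _ Subtype.val_injective
      have hliS : LinearIndependent ℂ (fun m : {m : ℕ // m ≠ N} =>
          (⟨eN (m : ℕ), Submodule.subset_span ⟨m, rfl⟩⟩ : S)) := by
        apply LinearIndependent.of_comp S.subtype
        exact hli
      exact Module.Finite.not_linearIndependent_of_infinite _ hliS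
    exact Module.finrank_of_infinite_dimensional hnotfd
  · rw [Submodule.mem_orthogonal]
    intro u hu
    have h1 : S ≤ LinearMap.ker (innerSL ℂ (eN N) : lp (fun _ : ℕ => ℂ) 2 →ₗ[ℂ] ℂ) := by
      rw [hSdef, Submodule.span_le]
      rintro y ⟨m, rfl⟩
      have h : (inner ℂ (eN N) (eN (m : ℕ)) : ℂ) = 0 := by
        rw [eN_inner, eN_apply]
        simp [Ne.symm m.2]
      simpa [LinearMap.mem_ker] using h
    have h2 := h1 hu
    rw [LinearMap.mem_ker] at h2
    have h3 : (inner ℂ (eN N) u : ℂ) = 0 := h2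
    rw [← inner_conj_symm, h3, map_zero]
  · intro g hg m hm
    rw [Submodule.mem_orthogonal] at hg
    have h := hg (eN m) (Submodule.subset_span ⟨⟨m, hm⟩, rfl⟩)
    rwa [eN_inner] at h

/-- Let λ_n(ξ) be the increasingly ordered eigenvalues of
A(ξ) = A₀ + A₁(ξ) + ½|ξ|²I on ℓ²(ℕ,ℂ), characterized by the max-min principle
λ_n(ξ) = max_{dim S = n} min{ ⟨A(ξ)g,g⟩ : g ∈ S^⊥ ∩ D(A₀), ‖g‖ = 1 }.
Here A₀ is diagonal with increasing eigenvalues E_n ≥ 1 → ∞ and A₁(ξ)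
satisfies ‖A₁(ξ)g‖² ≤ 2|ξ|²⟨A₀g,g⟩ on D(A₀).  Then for every n,
λ_n(ξ) ≤ E_n + 2|ξ| E_n^{1/2} + ½|ξ|². -/
theorem eigenvalue_upper_bound_maxmin
    (d : ℕ) (E : ℕ → ℝ) (hE1 : ∀ n, 1 ≤ E n) (hEmono : Monotone E)
    (hEtop : Filter.Tendsto E Filter.atTop Filter.atTop)
    (ξ : EuclideanSpace ℝ (Fin d))
    (a1 : lp (fun _ : ℕ => ℂ) 2 → ℕ → ℂ)
    (ha1 : ∀ g : lp (fun _ : ℕ => ℂ) 2,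
      Summable (fun n => (E n) ^ 2 * ‖g n‖ ^ 2) →
      Summable (fun n => ‖a1 g n‖ ^ 2) ∧
        ∑' n : ℕ, ‖a1 g n‖ ^ 2 ≤ 2 * ‖ξ‖ ^ 2 * ∑' n : ℕ, E n * ‖g n‖ ^ 2)
    (Q : lp (fun _ : ℕ => ℂ) 2 → ℝ)
    (hQ : ∀ g, Q g = (∑' n : ℕ, (starRingEnd ℂ) (g n) *
        ((E n : ℂ) * g n + a1 g n + ((‖ξ‖ ^ 2 / 2 : ℝ) : ℂ) * g n)).re)
    (lam : ℕ → ℝ)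
    (hmaxmin : ∀ n : ℕ, lam n =
      ⨆ S : {S : Submodule ℂ (lp (fun _ : ℕ => ℂ) 2) // Module.finrank ℂ S = n},
        ⨅ g : {g : lp (fun _ : ℕ => ℂ) 2 // g ∈ (S.1)ᗮ ∧
            Summable (fun m => (E m) ^ 2 * ‖g m‖ ^ 2) ∧ ‖g‖ = 1},
          Q g.1) :
    ∀ n : ℕ, lam n ≤ E n + 2 * ‖ξ‖ * Real.sqrt (E n) + ‖ξ‖ ^ 2 / 2 := by
  intro n
  rw [hmaxmin n]
  have hr : (0:ℝ) ≤ ‖ξ‖ := norm_nonneg ξ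
  have hB0 : 0 ≤ E n + 2 * ‖ξ‖ * Real.sqrt (E n) + ‖ξ‖ ^ 2 / 2 := by
    have h1 := hE1 n
    have h2 : 0 ≤ Real.sqrt (E n) := Real.sqrt_nonneg _
    nlinarith [sq_nonneg ‖ξ‖]
  rcases Nat.eq_zero_or_pos n with hn0 | hnpos
  · subst hn0
    by_cases hb : BddAbove (Set.range fun
        S : {S : Submodule ℂ (lp (fun _ : ℕ => ℂ) 2) // Module.finrank ℂ S = 0} =>
      ⨅ g : {g : lp (fun _ : ℕ => ℂ) 2 // g ∈ (S.1)ᗮ ∧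
          Summable (fun m => (E m) ^ 2 * ‖g m‖ ^ 2) ∧ ‖g‖ = 1},
        Q g.1)
    · exfalso
      obtain ⟨M, hM⟩ := hb
      obtain ⟨N, hN⟩ := (hEtop.eventually_gt_atTop (2 * (M + 2 * ‖ξ‖ ^ 2))).exists
      obtain ⟨S, hS0, heS, hvanish⟩ := badS N
      have hle := hM (Set.mem_range_self
        (⟨S, hS0⟩ : {S : Submodule ℂ (lp (fun _ : ℕ => ℂ) 2) // Module.finrank ℂ S = 0}))
      have hsumN : Summable (fun m => (E m) ^ 2 * ‖(eN N) m‖ ^ 2) := by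
        apply summable_of_ne_finset_zero (s := {N})
        intro m hm
        have hm' : m ≠ N := by simpa using hm
        simp [eN_apply, hm']
      haveI : Nonempty {g : lp (fun _ : ℕ => ℂ) 2 // g ∈ Sᗮ ∧
          Summable (fun m => (E m) ^ 2 * ‖g m‖ ^ 2) ∧ ‖g‖ = 1} :=
        ⟨⟨eN N, heS, hsumN, eN_norm N⟩⟩
      have hge : E N - 2 * ‖ξ‖ * Real.sqrt (E N) ≤
          ⨅ g : {g : lp (fun _ : ℕ => ℂ) 2 // g ∈ Sᗮ ∧
              Summable (fun m => (E m) ^ 2 * ‖g m‖ ^ 2) ∧ ‖g‖ = 1}, Q g.1 := by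
        refine le_ciInf fun g => ?_
        rw [hQ g.1]
        exact aux_Q_ge E hE1 ‖ξ‖ hr a1 ha1 N g.1
          (fun m hm => hvanish g.1 g.2.1 m hm) g.2.2.2
      have hsq : Real.sqrt (E N) ^ 2 = E N := Real.sq_sqrt (zero_le_one.trans (hE1 N))
      have hlt : M < E N - 2 * ‖ξ‖ * Real.sqrt (E N) := by
        nlinarith [sq_nonneg (Real.sqrt (E N) - 2 * ‖ξ‖), Real.sqrt_nonneg (E N)]
      have := hge.trans hle
      linarith
    · rw [Real.iSup_of_not_bddAbove hb]
      exact hB0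
  · refine Real.iSup_le (fun S => ?_) hB0
    haveI : FiniteDimensional ℂ S.1 :=
      FiniteDimensional.of_finrank_pos (by rw [S.2]; exact hnpos)
    obtain ⟨g, hgperp, hgsupp, hgnorm⟩ := exists_perp_witness n S.1 S.2
    obtain ⟨hsum, hle⟩ := aux_Q_le E hE1 hEmono ‖ξ‖ hr a1 ha1 n g hgsupp hgnorm
    by_cases hbb : BddBelow (Set.range fun g : {g : lp (fun _ : ℕ => ℂ) 2 // g ∈ (S.1)ᗮ ∧
        Summable (fun m => (E m) ^ 2 * ‖g m‖ ^ 2) ∧ ‖g‖ = 1} => Q g.1)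
    · refine le_trans (ciInf_le hbb ⟨g, hgperp, hsum, hgnorm⟩) ?_
      rw [hQ g]
      exact hle
    · rw [Real.iInf_of_not_bddBelow hbb]
      exact hB0
end

section
/- Let p > s ≥ 0 be integers with 2(p − s) > d. Then there exists a constant C such that for every λ' in a lattice 𝓛* ⊂ ℝ^d, Σ_{λ ∈ 𝓛*} (1 + |λ|^{2s}) / (1 + |λ − λ'|^{2p}) ≤ C (1 + |λ'|^{2s}). -/
open Real Finset

set_option maxHeartbeats 1000000

private lemma aux_pow_le {a : ℝ} (ha : 0 ≤ a) {m n : ℕ} (h : m ≤ n) :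
    a ^ m ≤ 1 + a ^ n := by
  rcases le_total a 1 with h1 | h1
  · have h2 : a ^ m ≤ 1 := pow_le_one₀ ha h1
    have := pow_nonneg ha n; linarith
  · have h2 : a ^ m ≤ a ^ n := pow_le_pow_right₀ h1 h
    linarith

private lemma aux_frac_le {a : ℝ} (ha : 0 ≤ a) (m n : ℕ) :
    (1 + a ^ m) / (1 + a ^ (m + n)) ≤ 4 / (1 + a ^ n) := by
  have hX : 0 ≤ a ^ (m + n) := pow_nonneg ha _
  have hm : a ^ m ≤ 1 + a ^ (m + n) := aux_pow_le ha (Nat.le_add_right _ _)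
  have hn : a ^ n ≤ 1 + a ^ (m + n) := aux_pow_le ha (Nat.le_add_left _ _)
  have hmn : a ^ m * a ^ n = a ^ (m + n) := (pow_add a m n).symm
  have h1 : (0:ℝ) < 1 + a ^ (m + n) := by positivity
  have h2 : (0:ℝ) < 1 + a ^ n := by positivity
  rw [div_le_div_iff₀ h1 h2]
  nlinarith [pow_nonneg ha m, pow_nonneg ha n]

private lemma aux_one_add_pow {x : ℝ} (hx : 0 ≤ x) (n : ℕ) :
    (1 + x) ^ n ≤ 2 ^ n * (1 + x ^ n) := by
  have h2 : (0:ℝ) < 2 ^ n := by positivity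
  rcases le_total x 1 with h1 | h1
  · have : (1 + x) ^ n ≤ 2 ^ n := pow_le_pow_left₀ (by linarith) (by linarith) n
    nlinarith [pow_nonneg hx n]
  · have : (1 + x) ^ n ≤ (2 * x) ^ n := pow_le_pow_left₀ (by linarith) (by linarith) n
    rw [mul_pow] at this
    nlinarith [pow_nonneg hx n]

private lemma aux_peetre {a b : ℝ} (ha : 0 ≤ a) (hb : 0 ≤ b) (n : ℕ) :
    1 + (a + b) ^ n ≤ 2 ^ n * ((1 + a ^ n) * (1 + b ^ n)) := by
  have h2 : (1:ℝ) ≤ 2 ^ n := one_le_pow₀ (by norm_num : (1:ℝ) ≤ 2)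
  have h3 : (a + b) ^ n ≤ 2 ^ n * (a ^ n + b ^ n) := by
    rcases le_total a b with h | h
    · have : (a + b) ^ n ≤ (2 * b) ^ n := pow_le_pow_left₀ (by linarith) (by linarith) n
      rw [mul_pow] at this
      nlinarith [pow_nonneg ha n, pow_nonneg hb n, pow_pos (show (0:ℝ) < 2 by norm_num) n]
    · have : (a + b) ^ n ≤ (2 * a) ^ n := pow_le_pow_left₀ (by linarith) (by linarith) n
      rw [mul_pow] at this
      nlinarith [pow_nonneg ha n, pow_nonneg hb n, pow_pos (show (0:ℝ) < 2 by norm_num) n]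
  nlinarith [pow_nonneg ha n, pow_nonneg hb n, mul_nonneg (pow_nonneg ha n) (pow_nonneg hb n)]

private lemma aux_summable_one {r : ℝ} (hr : 1 / 2 < r) :
    Summable fun n : ℤ => ((1:ℝ) + (n : ℝ) ^ 2) ^ (-r) := by
  have hb : (1:ℝ) < 2 * r := by linarith
  have h := summable_abs_int_rpow hb
  rw [← Finset.summable_compl_iff ({0} : Finset ℤ)]
  apply Summable.of_nonneg_of_le (fun n => by positivity)
    (fun x => ?_) (h.subtype _)
  obtain ⟨n, hn⟩ := x
  have hn0 : n ≠ 0 := by simpa using hn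
  have hnn : ((n : ℝ)) ≠ 0 := Int.cast_ne_zero.mpr hn0
  have h1 : (0:ℝ) < (n : ℝ) ^ 2 := by positivity
  have h2 : ((n:ℝ)) ^ 2 ≤ 1 + (n:ℝ) ^ 2 := by linarith
  calc ((1:ℝ) + (n:ℝ) ^ 2) ^ (-r) ≤ ((n:ℝ) ^ 2) ^ (-r) :=
        Real.rpow_le_rpow_of_nonpos h1 h2 (by linarith)
    _ = |(n:ℝ)| ^ (-(2 * r)) := by
        rw [← sq_abs, ← Real.rpow_natCast |(n:ℝ)| 2, ← Real.rpow_mul (abs_nonneg _)]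
        norm_num

private lemma aux_summable_pi {g : ℤ → ℝ} (hg : Summable g) (hg0 : ∀ n, 0 ≤ g n) (d : ℕ) :
    Summable fun z : Fin d → ℤ => ∏ i, g (z i) := by
  induction d with
  | zero =>
      haveI : Subsingleton (Fin 0 → ℤ) := ⟨fun a b => funext fun i => i.elim0⟩
      haveI : Finite (Fin 0 → ℤ) := Finite.of_subsingleton
      exact Summable.of_finite
  | succ d ih =>
      have h2 : Summable fun x : ℤ × (Fin d → ℤ) => g x.1 * ∏ i, g (x.2 i) :=
        Summable.mul_of_nonneg (f := g) (g := fun z : Fin d → ℤ => ∏ i, g (z i)) hg ih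
          hg0 (fun z => Finset.prod_nonneg fun i _ => hg0 _)
      have e := Fin.consEquiv (fun _ : Fin (d + 1) => ℤ)
      rw [← (Fin.consEquiv (fun _ : Fin (d + 1) => ℤ)).summable_iff]
      apply h2.congr
      intro x
      simp [Fin.consEquiv, Fin.prod_univ_succ]

private lemma aux_summable_norm {d q : ℕ} (hd : d < 2 * q) (hd0 : 0 < d) :
    Summable fun z : Fin d → ℤ => ((1 + ∑ i, (z i : ℝ) ^ 2) ^ q)⁻¹ := by
  set r : ℝ := q / d with hrdef
  have hdR : (0:ℝ) < d := by exact_mod_cast hd0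
  have hr : 1 / 2 < r := by
    rw [hrdef, div_lt_div_iff₀ (by norm_num) hdR]
    nlinarith [(show (d:ℝ) < 2 * q by exact_mod_cast hd)]
  have hr0 : 0 ≤ r := le_trans (by norm_num) hr.le
  have h1d := aux_summable_one hr
  apply Summable.of_nonneg_of_le (fun z => by positivity) (fun z => ?_)
    (aux_summable_pi h1d (fun n => by positivity) d)
  have hQ0 : (0:ℝ) ≤ ∑ i, (z i : ℝ) ^ 2 := Finset.sum_nonneg fun i _ => sq_nonneg _
  set Q : ℝ := ∑ i, (z i : ℝ) ^ 2 with hQdef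
  have h0 : (0:ℝ) < 1 + Q := by linarith
  have hprod : ∏ i, (1 + (z i : ℝ) ^ 2) ≤ (1 + Q) ^ d := by
    have h := Finset.prod_le_prod (s := Finset.univ) (f := fun i : Fin d => 1 + (z i : ℝ) ^ 2)
      (g := fun _ : Fin d => 1 + Q) (fun i _ => by positivity)
      (fun i _ => by
        have hle : (z i : ℝ) ^ 2 ≤ Q :=
          Finset.single_le_sum (fun j _ => sq_nonneg ((z j : ℝ))) (Finset.mem_univ i)
        show 1 + (z i : ℝ) ^ 2 ≤ 1 + Q
        linarith)
    simpa using h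
  have hppos : (0:ℝ) < ∏ i, (1 + (z i : ℝ) ^ 2) :=
    Finset.prod_pos fun i _ => by positivity
  have key : ((1 + Q) ^ q)⁻¹ = ((1 + Q) ^ (d:ℕ)) ^ (-r) := by
    rw [← Real.rpow_natCast (1 + Q) d, ← Real.rpow_natCast (1 + Q) q,
      ← Real.rpow_mul h0.le, ← Real.rpow_neg_one ((1 + Q) ^ (q:ℝ)),
      ← Real.rpow_mul (by positivity)]
    congr 1
    rw [hrdef]
    field_simp
  calc ((1 + Q) ^ q)⁻¹ = ((1 + Q) ^ (d:ℕ)) ^ (-r) := key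
    _ ≤ (∏ i, (1 + (z i : ℝ) ^ 2)) ^ (-r) :=
        Real.rpow_le_rpow_of_nonpos hppos hprod (neg_nonpos.mpr hr0)
    _ = ∏ i, ((1 + (z i : ℝ) ^ 2)) ^ (-r) :=
        (Real.finset_prod_rpow _ _ (fun i _ => by positivity) _).symm

/-- Let p > s ≥ 0 be integers with 2(p − s) > d. Then there is a
constant C such that for every λ' in the lattice 𝓛* = {L* z : z ∈ ℤ^d}
(L* invertible), Σ_{λ ∈ 𝓛*} (1 + |λ|^{2s}) / (1 + |λ − λ'|^{2p}) ≤ C (1 + |λ'|^{2s}),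
where |·| is the Euclidean norm. -/
theorem lattice_sum_decay
    (d : ℕ) (Lstar : Matrix (Fin d) (Fin d) ℝ) (hL : Lstar.det ≠ 0)
    (s p : ℕ) (hsp : s < p) (hd : d < 2 * (p - s)) :
    ∃ C > 0, ∀ z' : Fin d → ℤ,
      (∑' z : Fin d → ℤ,
        (1 + Real.sqrt (∑ i, (Lstar.mulVec (fun j => (z j : ℝ)) i) ^ 2) ^ (2 * s)) /
          (1 + Real.sqrt (∑ i, ((Lstar.mulVec (fun j => (z j : ℝ)) -
              Lstar.mulVec (fun j => (z' j : ℝ))) i) ^ 2) ^ (2 * p)))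
        ≤ C * (1 + Real.sqrt (∑ i, (Lstar.mulVec (fun j => (z' j : ℝ)) i) ^ 2) ^ (2 * s)) := by
  classical
  set q := p - s with hqdef
  have hq2 : 2 * p = 2 * s + 2 * q := by omega
  have hdq : d < 2 * q := hd
  have key : ∀ w : Fin d → ℝ,
      Real.sqrt (∑ i, w i ^ 2) = ‖(WithLp.equiv 2 (Fin d → ℝ)).symm w‖ := by
    intro w
    rw [EuclideanSpace.norm_eq]
    congr 1
    refine Finset.sum_congr rfl fun i _ => ?_
    rw [WithLp.equiv_symm_apply, PiLp.toLp_apply, Real.norm_eq_abs, sq_abs]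
  set F : (Fin d → ℤ) → EuclideanSpace ℝ (Fin d) :=
    fun z => (WithLp.equiv 2 (Fin d → ℝ)).symm (Lstar.mulVec fun j => (z j : ℝ)) with hF
  set G : (Fin d → ℤ) → EuclideanSpace ℝ (Fin d) :=
    fun z => (WithLp.equiv 2 (Fin d → ℝ)).symm (fun j => (z j : ℝ)) with hG
  have hcast : ∀ u v : Fin d → ℤ,
      (fun j => (((u - v) j : ℤ) : ℝ)) = (fun j => (u j : ℝ)) - (fun j => (v j : ℝ)) := by
    intro u v; funext j; simp [Pi.sub_apply]
  have hFsub : ∀ u v : Fin d → ℤ, F (u - v) = F u - F v := by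
    intro u v
    simp only [hF]
    rw [hcast u v, Matrix.mulVec_sub]
    rfl
  have keyF : ∀ z : Fin d → ℤ,
      Real.sqrt (∑ i, (Lstar.mulVec (fun j => (z j : ℝ)) i) ^ 2) = ‖F z‖ := by
    intro z; rw [key]
  have keyFF : ∀ z z' : Fin d → ℤ,
      Real.sqrt (∑ i, ((Lstar.mulVec (fun j => (z j : ℝ)) -
        Lstar.mulVec (fun j => (z' j : ℝ))) i) ^ 2) = ‖F (z - z')‖ := by
    intro z z'
    rw [key, hFsub]
    rfl
  -- antilipschitz
  obtain ⟨c, hc0, hc⟩ : ∃ c > 0, ∀ z : Fin d → ℤ, ‖G z‖ ≤ c * ‖F z‖ := by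
    have hdet : IsUnit Lstar.det := isUnit_iff_ne_zero.mpr hL
    set T : EuclideanSpace ℝ (Fin d) →L[ℝ] EuclideanSpace ℝ (Fin d) :=
      LinearMap.toContinuousLinearMap (Matrix.toEuclideanLin Lstar⁻¹) with hT
    refine ⟨‖T‖ + 1, by positivity, fun z => ?_⟩
    have h1 : T (F z) = G z := by
      show Matrix.toEuclideanLin Lstar⁻¹ (F z) = G z
      simp only [hF, hG]
      rw [WithLp.equiv_symm_apply, Matrix.toEuclideanLin_apply_piLp_toLp]
      rw [Matrix.mulVec_mulVec, Matrix.nonsing_inv_mul _ hdet, Matrix.one_mulVec]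
    calc ‖G z‖ = ‖T (F z)‖ := by rw [h1]
      _ ≤ ‖T‖ * ‖F z‖ := T.le_opNorm _
      _ ≤ (‖T‖ + 1) * ‖F z‖ := by nlinarith [norm_nonneg (F z), norm_nonneg T]
  set g : (Fin d → ℤ) → ℝ :=
    fun w => (1 + ‖F w‖ ^ (2 * s)) / (1 + ‖F w‖ ^ (2 * p)) with hg
  have hgnn : ∀ w, 0 ≤ g w := fun w => by
    simp only [hg]; positivity
  have hsum : Summable g := by
    rcases Nat.eq_zero_or_pos d with hd0 | hd0
    · subst hd0
      haveI : Subsingleton (Fin 0 → ℤ) := ⟨fun a b => funext fun i => i.elim0⟩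
      haveI : Finite (Fin 0 → ℤ) := Finite.of_subsingleton
      exact Summable.of_finite
    · have hds := aux_summable_norm hdq hd0
      set K : ℝ := 4 * (1 + c ^ (2 * q)) * 2 ^ q with hK
      apply Summable.of_nonneg_of_le hgnn (fun w => ?_) (hds.mul_left K)
      have ha0 : (0:ℝ) ≤ ‖F w‖ := norm_nonneg _
      have hb0 : (0:ℝ) ≤ ‖G w‖ := norm_nonneg _
      have hQ : ‖G w‖ ^ 2 = ∑ i, (w i : ℝ) ^ 2 := by
        simp only [hG]
        rw [← key, Real.sq_sqrt (Finset.sum_nonneg fun i _ => sq_nonneg _)]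
      have e1 : g w ≤ 4 / (1 + ‖F w‖ ^ (2 * q)) := by
        simp only [hg, hq2]
        exact aux_frac_le ha0 (2 * s) (2 * q)
      have e2 : 4 / (1 + ‖F w‖ ^ (2 * q)) ≤
          4 * (1 + c ^ (2 * q)) / (1 + ‖G w‖ ^ (2 * q)) := by
        have hp1 : (0:ℝ) < 1 + ‖F w‖ ^ (2 * q) := by positivity
        have hp2 : (0:ℝ) < 1 + ‖G w‖ ^ (2 * q) := by positivity
        rw [div_le_div_iff₀ hp1 hp2]
        have hbca : ‖G w‖ ^ (2 * q) ≤ (c * ‖F w‖) ^ (2 * q) :=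
          pow_le_pow_left₀ hb0 (hc w) _
        rw [mul_pow] at hbca
        nlinarith [pow_nonneg ha0 (2 * q), pow_nonneg hc0.le (2 * q),
          mul_nonneg (pow_nonneg hc0.le (2 * q)) (pow_nonneg ha0 (2 * q))]
      have e3 : 4 * (1 + c ^ (2 * q)) / (1 + ‖G w‖ ^ (2 * q)) ≤
          K * ((1 + ‖G w‖ ^ 2) ^ q)⁻¹ := by
        have hp2 : (0:ℝ) < 1 + ‖G w‖ ^ (2 * q) := by positivity
        have hp3 : (0:ℝ) < (1 + ‖G w‖ ^ 2) ^ q := by positivity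
        have hup : (1 + ‖G w‖ ^ 2) ^ q ≤ 2 ^ q * (1 + ‖G w‖ ^ (2 * q)) := by
          have := aux_one_add_pow (sq_nonneg ‖G w‖) q
          rw [← pow_mul] at this
          linarith
        have hcq : (0:ℝ) ≤ 4 * (1 + c ^ (2 * q)) := by positivity
        rw [← div_eq_mul_inv, div_le_div_iff₀ hp2 hp3, hK]
        nlinarith [mul_le_mul_of_nonneg_left hup hcq]
      calc g w ≤ 4 / (1 + ‖F w‖ ^ (2 * q)) := e1
        _ ≤ 4 * (1 + c ^ (2 * q)) / (1 + ‖G w‖ ^ (2 * q)) := e2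
        _ ≤ K * ((1 + ‖G w‖ ^ 2) ^ q)⁻¹ := e3
        _ = K * ((1 + ∑ i, (w i : ℝ) ^ 2) ^ q)⁻¹ := by rw [hQ]
  set T := ∑' w, g w with hTdef
  have hT0 : 0 ≤ T := tsum_nonneg hgnn
  have h2s0 : (0:ℝ) < 2 ^ (2 * s) := by positivity
  refine ⟨2 ^ (2 * s) * T + 1, by nlinarith, fun z' => ?_⟩
  rw [keyF z']
  have goal_eq : (∑' z : Fin d → ℤ,
      (1 + Real.sqrt (∑ i, (Lstar.mulVec (fun j => (z j : ℝ)) i) ^ 2) ^ (2 * s)) /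
        (1 + Real.sqrt (∑ i, ((Lstar.mulVec (fun j => (z j : ℝ)) -
            Lstar.mulVec (fun j => (z' j : ℝ))) i) ^ 2) ^ (2 * p))) =
      ∑' z : Fin d → ℤ,
        (1 + ‖F z‖ ^ (2 * s)) / (1 + ‖F (z - z')‖ ^ (2 * p)) := by
    exact tsum_congr fun z => by rw [keyF z, keyFF z z']
  rw [goal_eq]
  have hpt : ∀ z : Fin d → ℤ,
      (1 + ‖F z‖ ^ (2 * s)) / (1 + ‖F (z - z')‖ ^ (2 * p)) ≤
        2 ^ (2 * s) * (1 + ‖F z'‖ ^ (2 * s)) * g (z - z') := by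
    intro z
    have hA0 : (0:ℝ) ≤ ‖F (z - z')‖ := norm_nonneg _
    have hB0 : (0:ℝ) ≤ ‖F z'‖ := norm_nonneg _
    have hden : (0:ℝ) < 1 + ‖F (z - z')‖ ^ (2 * p) := by positivity
    have hsplit : F z = F (z - z') + F z' := by
      have : z - z' + z' = z := sub_add_cancel z z'
      rw [hFsub, sub_add_cancel]
    have h1 : ‖F z‖ ≤ ‖F (z - z')‖ + ‖F z'‖ := by
      rw [hsplit]; exact norm_add_le _ _
    have h2 : ‖F z‖ ^ (2 * s) ≤ (‖F (z - z')‖ + ‖F z'‖) ^ (2 * s) :=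
      pow_le_pow_left₀ (norm_nonneg _) h1 _
    have h3 := aux_peetre hA0 hB0 (2 * s)
    calc (1 + ‖F z‖ ^ (2 * s)) / (1 + ‖F (z - z')‖ ^ (2 * p)) ≤
        (2 ^ (2 * s) * ((1 + ‖F (z - z')‖ ^ (2 * s)) * (1 + ‖F z'‖ ^ (2 * s)))) /
          (1 + ‖F (z - z')‖ ^ (2 * p)) := by
          gcongr
          linarith [h2, h3]
      _ = 2 ^ (2 * s) * (1 + ‖F z'‖ ^ (2 * s)) * g (z - z') := by
          simp only [hg]
          field_simp
  have hsum2 : Summable fun z : Fin d → ℤ => g (z - z') :=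
    (Equiv.subRight z').summable_iff.mpr hsum
  have hsumB : Summable fun z : Fin d → ℤ =>
      2 ^ (2 * s) * (1 + ‖F z'‖ ^ (2 * s)) * g (z - z') := by
    simpa [mul_assoc] using hsum2.mul_left (2 ^ (2 * s) * (1 + ‖F z'‖ ^ (2 * s)))
  have hsumL : Summable fun z : Fin d → ℤ =>
      (1 + ‖F z‖ ^ (2 * s)) / (1 + ‖F (z - z')‖ ^ (2 * p)) :=
    Summable.of_nonneg_of_le (fun z => by positivity) hpt hsumB
  calc (∑' z : Fin d → ℤ, (1 + ‖F z‖ ^ (2 * s)) / (1 + ‖F (z - z')‖ ^ (2 * p)))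
      ≤ ∑' z : Fin d → ℤ, 2 ^ (2 * s) * (1 + ‖F z'‖ ^ (2 * s)) * g (z - z') :=
        Summable.tsum_le_tsum hpt hsumL hsumB
    _ = 2 ^ (2 * s) * (1 + ‖F z'‖ ^ (2 * s)) * ∑' z : Fin d → ℤ, g (z - z') :=
        tsum_mul_left
    _ = 2 ^ (2 * s) * (1 + ‖F z'‖ ^ (2 * s)) * T := by
        rw [hTdef]
        congr 1
        exact (Equiv.subRight z').tsum_eq g
    _ ≤ (2 ^ (2 * s) * T + 1) * (1 + ‖F z'‖ ^ (2 * s)) := by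
        nlinarith [pow_nonneg (norm_nonneg (F z')) (2 * s), hT0, h2s0]
end
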